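/- Let n ≥ 1 and set a = ⌈n/2⌉, b = ⌊n/2⌋. Then Σ_{π ∈ S_n} x^{black(π)} y^{white(π)} = (xy)^{⌊n²/4⌋} · b! · a! · Σ_{r=0}^{b} C(a, r) · C(b, r) · x^{a−r} · y^{r}, where black(π) = Σ_i b_i(π_i) with b_i(h) = ⌈h/2⌉ for odd i and ⌊h/2⌋ for even i, and white(π) = Σ_i v_i(π_i) with v_i(h) = ⌊h/2⌋ for odd i and ⌈h/2⌉ for even i. -/

import Mathlib

/-- Black contribution of letter `h` at (1-based) index `i`. -/
def blackC (i h : ℕ) : ℕ := if Odd i then (h + 1) / 2 else h / 2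

/-- White contribution of letter `h` at (1-based) index `i`. -/
def whiteC (i h : ℕ) : ℕ := if Odd i then h / 2 else (h + 1) / 2

/-- Number of black cells in the bargraph of the word `w`. -/
def black {n : ℕ} (w : Fin n → ℕ) : ℕ := ∑ i : Fin n, blackC (i.1 + 1) (w i)

/-- Number of white cells in the bargraph of the word `w`. -/
def white {n : ℕ} (w : Fin n → ℕ) : ℕ := ∑ i : Fin n, whiteC (i.1 + 1) (w i)

namespace Stmt10Aux

open Finset

lemma q4 (n : ℕ) : n^2/4 + (n+1)/2 = (n+1)^2/4 := by
  obtain ⟨m, rfl⟩ | ⟨m, rfl⟩ := Nat.even_or_odd n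
  · rw [show (m+m)^2 = m*m*4 by ring, show (m+m+1)^2 = (m*m+m)*4+1 by ring]
    generalize m*m = q
    omega
  · rw [show (2*m+1)^2 = (m*m+m)*4+1 by ring, show (2*m+1+1)^2 = (m*m+2*m+1)*4 by ring]
    generalize m*m = q
    omega

lemma sumQ (n : ℕ) : ∑ j : Fin n, ((j : ℕ) + 1) / 2 = n^2/4 := by
  induction n with
  | zero => simp
  | succ n ih =>
    rw [Fin.sum_univ_castSucc]
    simp only [Fin.coe_castSucc, Fin.val_last]
    rw [ih, q4]

/-- Positions with even 0-based index (odd 1-based index): the "odd value" letters. -/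
def Ofin (n : ℕ) : Finset (Fin n) := filter (fun j : Fin n => Even j.1) univ
/-- Positions with odd 0-based index (even 1-based index). -/
def Efin (n : ℕ) : Finset (Fin n) := filter (fun i : Fin n => ¬ Even i.1) univ

lemma cardEvenFin (n : ℕ) : #(Ofin n) = (n+1)/2 := by
  rw [Ofin, Finset.card_filter]
  induction n with
  | zero => simp
  | succ n ih =>
    rw [Fin.sum_univ_castSucc]
    simp only [Fin.coe_castSucc, Fin.val_last]
    rw [ih]
    rcases Nat.even_or_odd n with h | h
    · rw [if_pos h]; rw [Nat.even_iff] at h; omega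
    · rw [if_neg (Nat.not_even_iff_odd.mpr h)]; rw [Nat.odd_iff] at h; omega

lemma cardOddFin (n : ℕ) : #(Efin n) = n/2 := by
  have h := Finset.card_filter_add_card_filter_not (s := (univ : Finset (Fin n)))
    (p := fun i => Even i.1)
  have h2 : #(Ofin n) = (n+1)/2 := cardEvenFin n
  rw [Ofin] at h2
  rw [Efin]
  rw [h2, card_univ, Fintype.card_fin] at h
  omega

lemma black_eq {n : ℕ} (π : Equiv.Perm (Fin n)) :
    black (fun i => (π i).1 + 1) =
      n^2/4 + #(filter (fun i : Fin n => Even i.1 ∧ Even (π i).1) univ) := by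
  have key : ∀ i : Fin n, blackC (i.1+1) ((π i).1+1) =
      ((π i).1+1)/2 + (if Even i.1 ∧ Even (π i).1 then 1 else 0) := by
    intro i
    simp only [blackC, Nat.odd_add_one]
    by_cases h1 : Even i.1 <;> by_cases h2 : Even (π i).1 <;>
      simp [h1, h2] <;> rw [Nat.even_iff] at h2 <;> omega
  unfold black
  rw [Finset.sum_congr rfl (fun i _ => key i), Finset.sum_add_distrib,
    Equiv.sum_comp π (fun j : Fin n => ((j : ℕ)+1)/2), sumQ, ← card_filter]

lemma white_eq {n : ℕ} (π : Equiv.Perm (Fin n)) :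
    white (fun i => (π i).1 + 1) =
      n^2/4 + #(filter (fun i : Fin n => ¬ Even i.1 ∧ Even (π i).1) univ) := by
  have key : ∀ i : Fin n, whiteC (i.1+1) ((π i).1+1) =
      ((π i).1+1)/2 + (if ¬ Even i.1 ∧ Even (π i).1 then 1 else 0) := by
    intro i
    simp only [whiteC, Nat.odd_add_one]
    by_cases h1 : Even i.1 <;> by_cases h2 : Even (π i).1 <;>
      simp [h1, h2] <;> rw [Nat.even_iff] at h2 <;> omega
  unfold white
  rw [Finset.sum_congr rfl (fun i _ => key i), Finset.sum_add_distrib,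
    Equiv.sum_comp π (fun j : Fin n => ((j : ℕ)+1)/2), sumQ, ← card_filter]

lemma imgA {n : ℕ} (π : Equiv.Perm (Fin n)) :
    (Ofin n).filter (fun j => j ∈ (Efin n).image π) =
      (filter (fun i : Fin n => ¬ Even i.1 ∧ Even (π i).1) univ).image π := by
  ext j
  simp only [Ofin, Efin, mem_filter, mem_image, mem_univ, true_and]
  constructor
  · rintro ⟨hj, i, hi, rfl⟩
    exact ⟨i, ⟨hi, hj⟩, rfl⟩
  · rintro ⟨i, ⟨hi, hj⟩, rfl⟩
    exact ⟨hj, i, hi, rfl⟩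

lemma imgB {n : ℕ} (π : Equiv.Perm (Fin n)) :
    (Ofin n).filter (fun j => j ∉ (Efin n).image π) =
      (filter (fun i : Fin n => Even i.1 ∧ Even (π i).1) univ).image π := by
  ext j
  simp only [Ofin, Efin, mem_filter, mem_image, mem_univ, true_and, not_exists, not_and]
  constructor
  · rintro ⟨hj, hni⟩
    refine ⟨π.symm j, ⟨?_, by simp [hj]⟩, by simp⟩
    by_contra h
    exact hni (π.symm j) h (by simp)
  · rintro ⟨i, ⟨hi, hj⟩, rfl⟩
    refine ⟨hj, fun i' hi' he => hi' ?_⟩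
    rw [π.injective he]
    exact hi

lemma weight {n : ℕ} {R : Type*} [CommRing R] (x y : R) (π : Equiv.Perm (Fin n)) :
    (∏ j ∈ Ofin n, if j ∈ (Efin n).image π then y else x) =
      y ^ #(filter (fun i : Fin n => ¬ Even i.1 ∧ Even (π i).1) univ) *
        x ^ #(filter (fun i : Fin n => Even i.1 ∧ Even (π i).1) univ) := by
  rw [prod_ite, prod_const, prod_const, imgA, imgB,
    card_image_of_injective _ π.injective, card_image_of_injective _ π.injective]

lemma fiberA {n : ℕ} (S : Finset (Fin n)) (hS : #S = n/2) :
    #(filter (fun π : Equiv.Perm (Fin n) => (Efin n).image π = S) univ) =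
      (n/2).factorial * ((n+1)/2).factorial := by
  have hE : #(Efin n) = n/2 := cardOddFin n
  have equivCond : ∀ π : Equiv.Perm (Fin n),
      (Efin n).image π = S ↔ ∀ i, (i ∈ Efin n ↔ π i ∈ S) := by
    intro π
    constructor
    · rintro rfl i
      constructor
      · exact fun h => mem_image_of_mem _ h
      · intro h
        obtain ⟨i', hi', he⟩ := mem_image.mp h
        rwa [← π.injective he]
    · intro h
      apply Finset.eq_of_subset_of_card_le
      · intro j hj
        obtain ⟨i, hi, rfl⟩ := mem_image.mp hj
        exact (h i).mp hi
      · rw [card_image_of_injective _ π.injective, hE, hS]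
  rw [← Fintype.card_subtype]
  rw [Fintype.card_congr (Equiv.subtypeEquivRight equivCond)]
  have Ψ : {π : Equiv.Perm (Fin n) // ∀ i, (i ∈ Efin n ↔ π i ∈ S)} ≃
      (({i // i ∈ Efin n} ≃ {j // j ∈ S}) × ({i // ¬ i ∈ Efin n} ≃ {j // ¬ j ∈ S})) := by
    refine
      { toFun := fun p => (p.1.subtypeEquiv p.2, p.1.subtypeEquiv (fun i => not_iff_not.mpr (p.2 i)))
        invFun := fun fg =>
          ⟨(Equiv.sumCompl (· ∈ Efin n)).symm.trans
            ((fg.1.sumCongr fg.2).trans (Equiv.sumCompl (· ∈ S))), ?_⟩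
        left_inv := ?_
        right_inv := ?_ }
    · intro i
      by_cases h : i ∈ Efin n
      · simp only [h, true_iff]
        simp [Equiv.sumCompl_symm_apply_of_pos h]
      · simp only [h, false_iff]
        simp [Equiv.sumCompl_symm_apply_of_neg h]
        exact (fg.2 ⟨i, h⟩).2
    · rintro ⟨π, hπ⟩
      ext i
      by_cases h : i ∈ Efin n
      · simp [Equiv.sumCompl_symm_apply_of_pos h]
      · simp [Equiv.sumCompl_symm_apply_of_neg h]
    · rintro ⟨f, g⟩
      refine Prod.ext ?_ ?_
      · ext ⟨i, hi⟩
        simp [Equiv.sumCompl_symm_apply_of_pos hi]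
      · ext ⟨i, hi⟩
        simp [Equiv.sumCompl_symm_apply_of_neg hi]
  rw [Fintype.card_congr Ψ, Fintype.card_prod]
  have c1 : Fintype.card {i // i ∈ Efin n} = n/2 := by rw [Fintype.card_coe, hE]
  have c2 : Fintype.card {j // j ∈ S} = n/2 := by rw [Fintype.card_coe, hS]
  have c3 : Fintype.card {i // ¬ i ∈ Efin n} = (n+1)/2 := by
    rw [Fintype.card_subtype_compl, c1, Fintype.card_fin]; omega
  have c4 : Fintype.card {j // ¬ j ∈ S} = (n+1)/2 := by
    rw [Fintype.card_subtype_compl, c2, Fintype.card_fin]; omega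
  rw [Fintype.card_equiv (Fintype.equivOfCardEq (c1.trans c2.symm)),
    Fintype.card_equiv (Fintype.equivOfCardEq (c3.trans c4.symm)), c1, c3]

lemma fiberB {n : ℕ} (t : ℕ) (ht : t ≤ n/2) :
    #(filter (fun S : Finset (Fin n) => #(S ∩ Ofin n) = t) (powersetCard (n/2) univ)) =
      ((n+1)/2).choose t * (n/2).choose (n/2 - t) := by
  have hdisj : ∀ P Q : Finset (Fin n), P ⊆ Ofin n → Q ⊆ Efin n → Disjoint P Q := by
    intro P Q hP hQ
    refine Finset.disjoint_left.mpr fun i hiP hiQ => ?_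
    have h1 := hP hiP
    have h2 := hQ hiQ
    simp only [Ofin, Efin, mem_filter, mem_univ, true_and] at h1 h2
    exact h2 h1
  have hinterP : ∀ P Q : Finset (Fin n), P ⊆ Ofin n → Q ⊆ Efin n → (P ∪ Q) ∩ Ofin n = P := by
    intro P Q hP hQ
    rw [union_inter_distrib_right, inter_eq_left.mpr hP,
      disjoint_iff_inter_eq_empty.mp ((hdisj (Ofin n) Q Finset.Subset.rfl hQ).symm), union_empty]
  rw [show ((n+1)/2).choose t * (n/2).choose (n/2 - t) =
      #((powersetCard t (Ofin n)) ×ˢ (powersetCard (n/2 - t) (Efin n))) by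
    rw [card_product, card_powersetCard, card_powersetCard, cardEvenFin, cardOddFin]]
  apply Finset.card_nbij' (fun S => (S ∩ Ofin n, S \ Ofin n)) (fun P => P.1 ∪ P.2)
  · intro S hS
    simp only [mem_coe, mem_filter, mem_powersetCard_univ] at hS
    obtain ⟨hcard, hinter⟩ := hS
    have hsd : #(S ∩ Ofin n) + #(S \ Ofin n) = #S := card_inter_add_card_sdiff S (Ofin n)
    simp only [mem_coe, mem_product, mem_powersetCard]
    refine ⟨⟨inter_subset_right, hinter⟩, ⟨?_, by omega⟩⟩
    intro i hi
    simp only [mem_sdiff, Ofin, Efin, mem_filter, mem_univ, true_and] at hi ⊢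
    exact hi.2
  · intro P hP
    simp only [mem_coe, mem_product, mem_powersetCard] at hP
    obtain ⟨⟨hP1, hc1⟩, hP2, hc2⟩ := hP
    simp only [mem_coe, mem_filter, mem_powersetCard_univ]
    constructor
    · rw [card_union_of_disjoint (hdisj _ _ hP1 hP2)]
      omega
    · rw [hinterP _ _ hP1 hP2, hc1]
  · intro S hS
    exact sup_inf_sdiff S (Ofin n)
  · intro P hP
    simp only [mem_coe, mem_product, mem_powersetCard] at hP
    obtain ⟨⟨hP1, hc1⟩, hP2, hc2⟩ := hP
    refine Prod.ext ?_ ?_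
    · exact hinterP _ _ hP1 hP2
    · show (P.1 ∪ P.2) \ Ofin n = P.2
      rw [union_sdiff_distrib, sdiff_eq_empty_iff_subset.mpr hP1,
        sdiff_eq_self_of_disjoint ((hdisj (Ofin n) P.2 Finset.Subset.rfl hP2).symm), empty_union]

lemma bigsum (n : ℕ) {R : Type*} [CommRing R] (x y : R) :
    ∑ π : Equiv.Perm (Fin n), (∏ j ∈ Ofin n, if j ∈ (Efin n).image π then y else x) =
      ((n/2).factorial : R) * (((n+1)/2).factorial : R) *
        ∑ t ∈ range (n/2+1),
          (((n+1)/2).choose t : R) * ((n/2).choose (n/2 - t) : R) * (y^t * x^((n+1)/2 - t)) := by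
  rw [← sum_fiberwise_of_maps_to (g := fun π : Equiv.Perm (Fin n) => (Efin n).image π)
      (t := powersetCard (n/2) univ) (fun π _ => by
        rw [mem_powersetCard_univ, card_image_of_injective _ π.injective, cardOddFin]) _]
  have step1 : ∀ S ∈ powersetCard (n/2) univ,
      (∑ π ∈ filter (fun π : Equiv.Perm (Fin n) => (Efin n).image π = S) univ,
        ∏ j ∈ Ofin n, if j ∈ (Efin n).image π then y else x) =
      ((n/2).factorial : R) * (((n+1)/2).factorial : R) *
        (∏ j ∈ Ofin n, if j ∈ S then y else x) := by
    intro S hS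
    rw [sum_congr rfl (fun π hπ => by rw [(mem_filter.mp hπ).2]), sum_const,
      fiberA S (mem_powersetCard_univ.mp hS), nsmul_eq_mul, Nat.cast_mul, mul_assoc]
  rw [sum_congr rfl step1, ← mul_sum]
  rw [mul_assoc, ← mul_assoc]
  congr 1
  rw [← sum_fiberwise_of_maps_to (g := fun S : Finset (Fin n) => #(S ∩ Ofin n))
      (t := range (n/2+1)) (fun S hS => by
        rw [mem_range]
        show #(S ∩ Ofin n) < n/2 + 1
        have h1 : #(S ∩ Ofin n) ≤ #S := card_le_card inter_subset_left
        rw [mem_powersetCard_univ] at hS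
        omega) _]
  apply sum_congr rfl
  intro t htr
  rw [mem_range] at htr
  have ht : t ≤ n/2 := by omega
  have hG : ∀ S ∈ filter (fun S : Finset (Fin n) => #(S ∩ Ofin n) = t) (powersetCard (n/2) univ),
      (∏ j ∈ Ofin n, if j ∈ S then y else x) = y^t * x^((n+1)/2 - t) := by
    intro S hS
    rw [mem_filter] at hS
    obtain ⟨hSp, hSt⟩ := hS
    have e1 : #(filter (fun j => j ∈ S) (Ofin n)) = t := by
      rw [filter_mem_eq_inter, inter_comm]; exact hSt
    have e2 : #(filter (fun j => ¬ j ∈ S) (Ofin n)) = (n+1)/2 - t := by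
      have h3 := card_inter_add_card_sdiff (Ofin n) S
      rw [sdiff_eq_filter] at h3
      rw [filter_mem_eq_inter] at e1
      rw [cardEvenFin] at h3
      omega
    rw [prod_ite, prod_const, prod_const, e1, e2]
  rw [sum_congr rfl hG, sum_const, fiberB t ht, nsmul_eq_mul]
  push_cast
  ring

end Stmt10Aux

open Finset Stmt10Aux in
theorem stmt_10 (n : ℕ) (hn : 1 ≤ n) (R : Type*) [CommRing R] (x y : R) :
    ∑ π : Equiv.Perm (Fin n),
        x ^ black (fun i => (π i).1 + 1) * y ^ white (fun i => (π i).1 + 1) =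
      (x * y) ^ (n ^ 2 / 4) * (n / 2).factorial * ((n + 1) / 2).factorial *
        ∑ r ∈ Finset.range (n / 2 + 1),
          (Nat.choose ((n + 1) / 2) r : R) * Nat.choose (n / 2) r *
            x ^ ((n + 1) / 2 - r) * y ^ r := by
  have key1 : ∀ π : Equiv.Perm (Fin n),
      x ^ black (fun i => (π i).1 + 1) * y ^ white (fun i => (π i).1 + 1)
        = (x*y)^(n^2/4) * ∏ j ∈ Ofin n, if j ∈ (Efin n).image π then y else x := by
    intro π
    rw [black_eq, white_eq, weight, pow_add, pow_add, mul_pow]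
    ring
  rw [Finset.sum_congr rfl (fun π _ => key1 π), ← mul_sum, bigsum]
  have hsum : ∀ t ∈ range (n/2+1),
      (((n+1)/2).choose t : R) * ((n/2).choose (n/2 - t) : R) * (y^t * x^((n+1)/2 - t)) =
      (Nat.choose ((n + 1) / 2) t : R) * Nat.choose (n / 2) t * x ^ ((n + 1) / 2 - t) * y ^ t := by
    intro t ht
    rw [mem_range] at ht
    rw [Nat.choose_symm (show t ≤ n/2 by omega)]
    ring
  rw [sum_congr rfl hsum]
  ring
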